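/- arXiv:2602.12539 — 4 statements merged into one kernel-verified Lean document; each statement's English description precedes it below -/
import Mathlib

section
/- Let T be a linear map on d×d matrices satisfying s-detailed balance with respect to a full-rank state ρ. Then the map F_s^{−1/2} ∘ T ∘ F_s^{1/2} is self-adjoint with respect to the Hilbert–Schmidt inner product; consequently T is diagonalizable with a real spectrum. -/
open Matrix
open scoped ComplexOrder

/-- Real matrix power of a Hermitian matrix, via the functional calculus. -/
noncomputable def mpow {n : Type*} [Fintype n] [DecidableEq n]
    (ρ : Matrix n n ℂ) (hρ : ρ.IsHermitian) (r : ℝ) : Matrix n n ℂ :=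
  hρ.cfc (fun x => x ^ r)

section aux

variable {n : Type*} [Fintype n] [DecidableEq n]

set_option maxHeartbeats 1000000 in
lemma mpow_herm {ρ : Matrix n n ℂ} (hρ : ρ.IsHermitian) (r : ℝ) :
    (mpow ρ hρ r)ᴴ = mpow ρ hρ r := by
  have h1 : (star (hρ.eigenvectorUnitary : Matrix n n ℂ))ᴴ
      = (hρ.eigenvectorUnitary : Matrix n n ℂ) := by
    rw [← Matrix.star_eq_conjTranspose, star_star]
  have h2 : (diagonal (RCLike.ofReal ∘ (fun x : ℝ => x ^ r) ∘ hρ.eigenvalues) : Matrix n n ℂ)ᴴ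
      = diagonal (RCLike.ofReal ∘ (fun x : ℝ => x ^ r) ∘ hρ.eigenvalues) := by
    rw [diagonal_conjTranspose]
    have hf : star (RCLike.ofReal ∘ (fun x : ℝ => x ^ r) ∘ hρ.eigenvalues : n → ℂ)
        = (RCLike.ofReal ∘ (fun x : ℝ => x ^ r) ∘ hρ.eigenvalues : n → ℂ) := by
      funext i
      simp [Function.comp, Pi.star_apply, RCLike.star_def, RCLike.conj_ofReal]
    rw [hf]
  simp only [mpow, Matrix.IsHermitian.cfc, Unitary.conjStarAlgAut_apply, conjTranspose_mul, mul_assoc, h1, h2]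
  rw [Matrix.star_eq_conjTranspose]

set_option maxHeartbeats 1000000 in
lemma mpow_add {ρ : Matrix n n ℂ} (hρ : ρ.PosDef) (r r' : ℝ) :
    mpow ρ hρ.1 r * mpow ρ hρ.1 r' = mpow ρ hρ.1 (r + r') := by
  have hU : (star (hρ.1.eigenvectorUnitary : Matrix n n ℂ)) *
      (hρ.1.eigenvectorUnitary : Matrix n n ℂ) = 1 :=
    Matrix.mem_unitaryGroup_iff'.mp (hρ.1.eigenvectorUnitary).2
  simp only [mpow, Matrix.IsHermitian.cfc, Unitary.conjStarAlgAut_apply]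
  have hD : diagonal (RCLike.ofReal ∘ (fun x : ℝ => x ^ r) ∘ hρ.1.eigenvalues) *
      diagonal (RCLike.ofReal ∘ (fun x : ℝ => x ^ r') ∘ hρ.1.eigenvalues) =
      diagonal ((RCLike.ofReal ∘ (fun x : ℝ => x ^ (r + r')) ∘ hρ.1.eigenvalues) :
        n → ℂ) := by
    rw [diagonal_mul_diagonal]
    have hf : (fun i => (RCLike.ofReal ∘ (fun x : ℝ => x ^ r) ∘ hρ.1.eigenvalues) i *
          (RCLike.ofReal ∘ (fun x : ℝ => x ^ r') ∘ hρ.1.eigenvalues) i : n → ℂ)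
        = ((RCLike.ofReal ∘ (fun x : ℝ => x ^ (r + r')) ∘ hρ.1.eigenvalues) : n → ℂ) := by
      funext i
      simp only [Function.comp_apply]
      rw [← RCLike.ofReal_mul, ← Real.rpow_add (hρ.eigenvalues_pos i)]
    rw [hf]
  rw [← hD]
  simp only [mul_assoc]
  rw [← mul_assoc (star (hρ.1.eigenvectorUnitary : Matrix n n ℂ))
    (hρ.1.eigenvectorUnitary : Matrix n n ℂ), hU, one_mul]

set_option maxHeartbeats 1000000 in
lemma mpow_zero {ρ : Matrix n n ℂ} (hρ : ρ.IsHermitian) :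
    mpow ρ hρ 0 = 1 := by
  have hU : (hρ.eigenvectorUnitary : Matrix n n ℂ) *
      (star (hρ.eigenvectorUnitary : Matrix n n ℂ)) = 1 :=
    Matrix.mem_unitaryGroup_iff.mp (hρ.eigenvectorUnitary).2
  simp only [mpow, Matrix.IsHermitian.cfc, Unitary.conjStarAlgAut_apply]
  have hD : diagonal ((RCLike.ofReal ∘ (fun x : ℝ => x ^ (0:ℝ)) ∘ hρ.eigenvalues) : n → ℂ)
      = (1 : Matrix n n ℂ) := by
    have h : ((RCLike.ofReal ∘ (fun x : ℝ => x ^ (0:ℝ)) ∘ hρ.eigenvalues) : n → ℂ)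
        = fun _ => 1 := by
      funext i
      simp [Function.comp, Real.rpow_zero]
    rw [h, diagonal_one]
  rw [hD, mul_one, hU]

omit [DecidableEq n] in
lemma g_left (M X Y : Matrix n n ℂ) :
    ((M * X)ᴴ * Y).trace = (Xᴴ * (Mᴴ * Y)).trace := by
  simp [conjTranspose_mul, mul_assoc]

omit [DecidableEq n] in
lemma g_right (M X Y : Matrix n n ℂ) :
    ((X * M)ᴴ * Y).trace = (Xᴴ * (Y * Mᴴ)).trace := by
  rw [conjTranspose_mul, Matrix.trace_mul_cycle, ← mul_assoc, Matrix.trace_mul_cycle,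
    mul_assoc]

end aux

set_option maxHeartbeats 2000000 in
/-- If `T` satisfies `s`-detailed balance w.r.t. a full-rank state `ρ`, then the conjugated
map `F_s^{-1/2} ∘ T ∘ F_s^{1/2}` is self-adjoint for the Hilbert–Schmidt inner product, and
consequently `T` is diagonalizable with real spectrum. -/
theorem detailed_balance_selfAdjoint_diagonalizable {n : Type*} [Fintype n] [DecidableEq n]
    (ρ : Matrix n n ℂ) (hρ : ρ.PosDef) (htr : ρ.trace = 1)
    (s : ℝ) (hs : s ∈ Set.Icc (0 : ℝ) 1)
    (T Tdual : Matrix n n ℂ →ₗ[ℂ] Matrix n n ℂ)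
    (hadj : ∀ A B : Matrix n n ℂ, (Aᴴ * Tdual B).trace = ((T A)ᴴ * B).trace)
    (hDB : ∀ A : Matrix n n ℂ,
      T (mpow ρ hρ.1 (1 - s) * A * mpow ρ hρ.1 s)
        = mpow ρ hρ.1 (1 - s) * Tdual A * mpow ρ hρ.1 s)
    (S : Matrix n n ℂ → Matrix n n ℂ)
    (hS : ∀ A : Matrix n n ℂ,
      S A = mpow ρ hρ.1 (-((1 - s) / 2)) *
              T (mpow ρ hρ.1 ((1 - s) / 2) * A * mpow ρ hρ.1 (s / 2)) *
            mpow ρ hρ.1 (-(s / 2))) :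
    (∀ A B : Matrix n n ℂ, ((S A)ᴴ * B).trace = (Aᴴ * S B).trace)
    ∧ ∃ (b : Module.Basis (Fin (Fintype.card n * Fintype.card n)) ℂ (Matrix n n ℂ))
        (μ : Fin (Fintype.card n * Fintype.card n) → ℝ),
        ∀ i, T (b i) = (μ i : ℂ) • b i := by
  set P : ℝ → Matrix n n ℂ := mpow ρ hρ.1 with hP
  have hPh : ∀ r, (P r)ᴴ = P r := fun r => mpow_herm hρ.1 r
  have hPm : ∀ r r', P r * P r' = P (r + r') := fun r r' => mpow_add hρ r r'
  have hP0 : P 0 = 1 := mpow_zero hρ.1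
  have hPc : ∀ r r' r'' : ℝ, r + r' = r'' → P r * P r' = P r'' := by
    intro r r' r'' h; rw [hPm, h]
  have collapse : ∀ (r1 r2 r3 r4 r1' r4' : ℝ) (M : Matrix n n ℂ),
      r1 + r2 = r1' → r3 + r4 = r4' →
      P r1 * (P r2 * M * P r3) * P r4 = P r1' * M * P r4' := by
    intro r1 r2 r3 r4 r1' r4' M h12 h34
    calc P r1 * (P r2 * M * P r3) * P r4
        = (P r1 * P r2) * M * (P r3 * P r4) := by simp only [mul_assoc]
      _ = P r1' * M * P r4' := by rw [hPc r1 r2 r1' h12, hPc r3 r4 r4' h34]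
  have collapse0 : ∀ (r1 r2 r3 r4 : ℝ) (M : Matrix n n ℂ),
      r1 + r2 = 0 → r3 + r4 = 0 →
      P r1 * (P r2 * M * P r3) * P r4 = M := by
    intro r1 r2 r3 r4 M h12 h34
    rw [collapse r1 r2 r3 r4 0 0 M h12 h34, hP0, one_mul, mul_one]
  -- Tdual formula
  have hTd : ∀ A : Matrix n n ℂ,
      Tdual A = P (-(1 - s)) * T (P (1 - s) * A * P s) * P (-s) := by
    intro A
    rw [hDB A]
    exact (collapse0 (-(1-s)) (1-s) s (-s) (Tdual A) (by ring) (by ring)).symm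
  -- part 1 : self-adjointness of S
  have part1 : ∀ A B : Matrix n n ℂ, ((S A)ᴴ * B).trace = (Aᴴ * S B).trace := by
    intro A B
    have step1 : ((S A)ᴴ * B).trace
        = ((T (P ((1-s)/2) * A * P (s/2)))ᴴ * (P (-((1-s)/2)) * B * P (-(s/2)))).trace := by
      rw [hS A, g_right, g_left, hPh, hPh]
      refine congrArg Matrix.trace ?_
      simp only [mul_assoc]
    have step2 : ((T (P ((1-s)/2) * A * P (s/2)))ᴴ * (P (-((1-s)/2)) * B * P (-(s/2)))).trace
        = ((P ((1-s)/2) * A * P (s/2))ᴴ *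
            Tdual (P (-((1-s)/2)) * B * P (-(s/2)))).trace := (hadj _ _).symm
    have key : Tdual (P (-((1-s)/2)) * B * P (-(s/2)))
        = P (-(1-s)) * T (P ((1-s)/2) * B * P (s/2)) * P (-s) := by
      rw [hTd]
      rw [collapse (1-s) (-((1-s)/2)) (-(s/2)) s ((1-s)/2) (s/2) B (by ring) (by ring)]
    have step3 : ((P ((1-s)/2) * A * P (s/2))ᴴ *
          (P (-(1-s)) * T (P ((1-s)/2) * B * P (s/2)) * P (-s))).trace
        = (Aᴴ * S B).trace := by
      rw [g_right, g_left, hPh, hPh, hS B]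
      refine congrArg Matrix.trace ?_
      rw [← mul_assoc (P ((1-s)/2)),
        collapse ((1-s)/2) (-(1-s)) (-s) (s/2) (-((1-s)/2)) (-(s/2)) _ (by ring) (by ring)]
    rw [step1, step2, key, step3]
  refine ⟨part1, ?_⟩
  -- S is linear
  let Slin : Matrix n n ℂ →ₗ[ℂ] Matrix n n ℂ :=
    { toFun := S
      map_add' := by
        intro A B
        simp only [hS, mul_add, add_mul, LinearMap.map_add]
      map_smul' := by
        intro c A
        simp only [hS, Matrix.mul_smul, Matrix.smul_mul, LinearMap.map_smul,
          RingHom.id_apply] }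
  -- linear equivalence with Euclidean space
  let e : Matrix n n ℂ ≃ₗ[ℂ] EuclideanSpace ℂ (n × n) :=
    { toFun := fun A => (WithLp.toLp 2 (fun p : n × n => A p.1 p.2) : EuclideanSpace ℂ (n × n))
      invFun := fun x => Matrix.of fun i j => x (i, j)
      map_add' := fun A B => rfl
      map_smul' := fun c A => rfl
      left_inv := fun A => rfl
      right_inv := fun x => rfl }
  have he : ∀ A B : Matrix n n ℂ, (inner ℂ (e A) (e B) : ℂ) = (Aᴴ * B).trace := by
    intro A B
    rw [PiLp.inner_apply]
    rw [Matrix.trace]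
    simp only [Matrix.diag, Matrix.mul_apply, conjTranspose_apply, RCLike.inner_apply]
    rw [Fintype.sum_prod_type]
    rw [Finset.sum_comm]
    exact Finset.sum_congr rfl fun _ _ => Finset.sum_congr rfl fun _ _ => mul_comm _ _
  let St : EuclideanSpace ℂ (n × n) →ₗ[ℂ] EuclideanSpace ℂ (n × n) :=
    e.toLinearMap ∘ₗ Slin ∘ₗ e.symm.toLinearMap
  have hSt : ∀ x, St x = e (Slin (e.symm x)) := fun x => rfl
  have hsym : St.IsSymmetric := by
    intro x y
    have hx : x = e (e.symm x) := (e.apply_symm_apply x).symm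
    have hy : y = e (e.symm y) := (e.apply_symm_apply y).symm
    calc (inner ℂ (St x) y : ℂ) = inner ℂ (e (Slin (e.symm x))) (e (e.symm y)) := by
          rw [hSt, ← hy]
      _ = ((S (e.symm x))ᴴ * (e.symm y)).trace := he _ _
      _ = ((e.symm x)ᴴ * S (e.symm y)).trace := part1 _ _
      _ = inner ℂ (e (e.symm x)) (e (Slin (e.symm y))) := (he _ _).symm
      _ = inner ℂ x (St y) := by rw [hSt, ← hx]
  have hfin : Module.finrank ℂ (EuclideanSpace ℂ (n × n))
      = Fintype.card n * Fintype.card n := by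
    rw [finrank_euclideanSpace, Fintype.card_prod]
  let v := hsym.eigenvectorBasis hfin
  let μ := hsym.eigenvalues hfin
  -- the conjugation equivalence
  let Fhalf : Matrix n n ℂ ≃ₗ[ℂ] Matrix n n ℂ :=
    { toFun := fun A => P ((1-s)/2) * A * P (s/2)
      invFun := fun A => P (-((1-s)/2)) * A * P (-(s/2))
      map_add' := fun A B => by simp only [mul_add, add_mul]
      map_smul' := fun c A => by simp only [Matrix.mul_smul, Matrix.smul_mul, RingHom.id_apply]
      left_inv := by
        intro A
        exact collapse0 (-((1-s)/2)) ((1-s)/2) (s/2) (-(s/2)) A (by ring) (by ring)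
      right_inv := by
        intro A
        exact collapse0 ((1-s)/2) (-((1-s)/2)) (-(s/2)) (s/2) A (by ring) (by ring) }
  refine ⟨(v.toBasis.map e.symm).map Fhalf, μ, ?_⟩
  intro i
  have hb : (((v.toBasis.map e.symm).map Fhalf) i : Matrix n n ℂ)
      = Fhalf (e.symm (v i)) := by
    simp [Module.Basis.map_apply]
  rw [hb]
  set X := e.symm (v i) with hX
  have hSX : S X = (μ i : ℂ) • X := by
    have h1 : St (v i) = (μ i : ℂ) • v i := hsym.apply_eigenvectorBasis hfin i
    have h2 : St (v i) = e (Slin X) := by rw [hSt, hX]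
    have h3 : Slin X = e.symm ((μ i : ℂ) • v i) := by
      rw [← h1, h2, LinearEquiv.symm_apply_apply]
    rw [LinearEquiv.map_smul] at h3
    exact h3
  have hTb : T (Fhalf X) = P ((1-s)/2) * S X * P (s/2) := by
    have hFX : (Fhalf X : Matrix n n ℂ) = P ((1-s)/2) * X * P (s/2) := rfl
    rw [hFX, hS X,
      collapse ((1-s)/2) (-((1-s)/2)) (-(s/2)) (s/2) 0 0 _ (by ring) (by ring),
      hP0, one_mul, mul_one]
  rw [hTb, hSX]
  have hFX : (Fhalf X : Matrix n n ℂ) = P ((1-s)/2) * X * P (s/2) := rfl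
  rw [hFX, Matrix.mul_smul, Matrix.smul_mul]
end

section
/- Let M and N be quantum channels satisfying s-detailed balance with respect to a full-rank state ρ. Suppose N has ρ as its unique fixed point and the spectrum of N is contained in [0,1]. Then the spectral gap of the composed channel M∘N∘M is at least the spectral gap of N: gap(M∘N∘M) ≥ gap(N). -/
open Matrix
open scoped ComplexOrder

/-- The weighted sesquilinear form `⟨A,B⟩_s = tr(Aᴴ ρ^{1-s} B ρ^s)`. -/
noncomputable def wInner {n : Type*} [Fintype n] [DecidableEq n]
    (ρ : Matrix n n ℂ) (hρ : ρ.IsHermitian) (s : ℝ) (A B : Matrix n n ℂ) : ℂ :=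
  (Aᴴ * mpow ρ hρ (1 - s) * B * mpow ρ hρ s).trace

section cfcAux
variable {n : Type*} [Fintype n] [DecidableEq n] {ρ : Matrix n n ℂ} (hρ : ρ.IsHermitian)

lemma my_cfc_mul (f g : ℝ → ℝ) :
    hρ.cfc f * hρ.cfc g = hρ.cfc (fun x => f x * g x) := by
  unfold Matrix.IsHermitian.cfc
  simp only [Unitary.conjStarAlgAut_apply]
  have h : (star (hρ.eigenvectorUnitary : Matrix n n ℂ)) * (hρ.eigenvectorUnitary : Matrix n n ℂ) = 1 :=
    Unitary.star_mul_self_of_mem (SetLike.coe_mem _)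
  have key : ∀ a b c d e f : Matrix n n ℂ, (a * b * c) * (d * e * f) = a * (b * (c * d) * e) * f := by
    intros; simp only [mul_assoc]
  rw [key, h, mul_one, diagonal_mul_diagonal]
  have : (fun i => (RCLike.ofReal ∘ f ∘ hρ.eigenvalues) i * (RCLike.ofReal ∘ g ∘ hρ.eigenvalues) i)
      = (RCLike.ofReal ∘ (fun x => f x * g x) ∘ hρ.eigenvalues : n → ℂ) := by
    funext i; simp
  rw [this]

lemma my_cfc_conjTranspose (f : ℝ → ℝ) : (hρ.cfc f)ᴴ = hρ.cfc f := by
  rw [← star_eq_conjTranspose]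
  unfold Matrix.IsHermitian.cfc
  simp only [Unitary.conjStarAlgAut_apply]
  simp only [StarMul.star_mul, star_star, mul_assoc]
  congr 1
  rw [star_eq_conjTranspose (diagonal _), diagonal_conjTranspose]
  congr 1
  funext i
  simp [Pi.star_def, Function.comp_def]

lemma my_cfc_congr {f g : ℝ → ℝ} (h : ∀ i, f (hρ.eigenvalues i) = g (hρ.eigenvalues i)) :
    hρ.cfc f = hρ.cfc g := by
  unfold Matrix.IsHermitian.cfc
  have : RCLike.ofReal ∘ f ∘ hρ.eigenvalues = (RCLike.ofReal ∘ g ∘ hρ.eigenvalues : n → ℂ) := by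
    funext i; simp [h i]
  rw [this]

lemma my_cfc_one : hρ.cfc (fun _ => (1:ℝ)) = 1 := by
  unfold Matrix.IsHermitian.cfc
  simp only [Unitary.conjStarAlgAut_apply]
  have h : (hρ.eigenvectorUnitary : Matrix n n ℂ) * (star (hρ.eigenvectorUnitary : Matrix n n ℂ)) = 1 :=
    Unitary.mul_star_self_of_mem (SetLike.coe_mem _)
  simpa [Function.comp_def] using h

lemma my_cfc_id : hρ.cfc (fun x => x) = ρ := by
  conv_rhs => rw [hρ.spectral_theorem]
  rfl
end cfcAux

section mpowAux
variable {n : Type*} [Fintype n] [DecidableEq n] {ρ : Matrix n n ℂ} (hρ : ρ.PosDef)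

lemma mpow_add_s10 (a b : ℝ) : mpow ρ hρ.1 a * mpow ρ hρ.1 b = mpow ρ hρ.1 (a + b) := by
  rw [mpow, mpow, mpow, my_cfc_mul]
  exact my_cfc_congr _ fun i => (Real.rpow_add (hρ.eigenvalues_pos i) a b).symm

lemma mpow_zero_s10 : mpow ρ hρ.1 0 = 1 := by
  rw [mpow, my_cfc_congr hρ.1 (g := fun _ => (1:ℝ)) (fun i => Real.rpow_zero _), my_cfc_one]

lemma mpow_one : mpow ρ hρ.1 1 = ρ := by
  rw [mpow, my_cfc_congr hρ.1 (g := fun x => x) (fun i => Real.rpow_one _), my_cfc_id]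

lemma mpow_herm_s10 (r : ℝ) : (mpow ρ hρ.1 r)ᴴ = mpow ρ hρ.1 r := my_cfc_conjTranspose _ _
end mpowAux

section traceAux
variable {n : Type*} [Fintype n] [DecidableEq n]

lemma trace_form (A B : Matrix n n ℂ) :
    (Aᴴ * B).trace = ∑ j, ∑ i, (starRingEnd ℂ) (A i j) * B i j := by
  simp [Matrix.trace, Matrix.diag, Matrix.mul_apply, Matrix.conjTranspose_apply]

lemma trace_self_re_nonneg (A : Matrix n n ℂ) : 0 ≤ ((Aᴴ * A).trace).re := by
  rw [trace_form, Complex.re_sum]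
  refine Finset.sum_nonneg fun j _ => ?_
  rw [Complex.re_sum]
  refine Finset.sum_nonneg fun i _ => ?_
  have : (starRingEnd ℂ) (A i j) * A i j = (Complex.normSq (A i j) : ℂ) := by
    rw [mul_comm, Complex.mul_conj]
  rw [this]
  exact_mod_cast Complex.normSq_nonneg _

lemma trace_self_re_pos {A : Matrix n n ℂ} (hA : A ≠ 0) : 0 < ((Aᴴ * A).trace).re := by
  rcases lt_or_eq_of_le (trace_self_re_nonneg A) with h | h
  · exact h
  · exfalso
    apply hA
    -- trace re = 0 forces all entries zero
    rw [trace_form, Complex.re_sum] at h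
    have hterm : ∀ j ∈ Finset.univ, (0:ℝ) ≤ (∑ i, (starRingEnd ℂ) (A i j) * A i j).re := by
      intro j _
      rw [Complex.re_sum]
      refine Finset.sum_nonneg fun i _ => ?_
      have : (starRingEnd ℂ) (A i j) * A i j = (Complex.normSq (A i j) : ℂ) := by
        rw [mul_comm, Complex.mul_conj]
      rw [this]; exact_mod_cast Complex.normSq_nonneg _
    have hj := (Finset.sum_eq_zero_iff_of_nonneg hterm).mp h.symm
    ext i j
    have := hj j (Finset.mem_univ j)
    rw [Complex.re_sum] at this
    have hterm2 : ∀ i ∈ Finset.univ, (0:ℝ) ≤ ((starRingEnd ℂ) (A i j) * A i j).re := by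
      intro i _
      have : (starRingEnd ℂ) (A i j) * A i j = (Complex.normSq (A i j) : ℂ) := by
        rw [mul_comm, Complex.mul_conj]
      rw [this]; exact_mod_cast Complex.normSq_nonneg _
    have hi := (Finset.sum_eq_zero_iff_of_nonneg hterm2).mp this i (Finset.mem_univ i)
    have : Complex.normSq (A i j) = 0 := by
      have heq : (starRingEnd ℂ) (A i j) * A i j = (Complex.normSq (A i j) : ℂ) := by
        rw [mul_comm, Complex.mul_conj]
      rw [heq] at hi
      exact_mod_cast hi
    simpa using Complex.normSq_eq_zero.mp this

lemma trace_self_eq_zero_iff {A : Matrix n n ℂ} (h : (Aᴴ * A).trace = 0) : A = 0 := by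
  by_contra hA
  have := trace_self_re_pos (n := n) hA
  rw [h] at this
  simp at this

/-- Operator Cauchy–Schwarz at the level of traces. -/
lemma schwarz_trace {ι : Type*} [Fintype ι] (K C : ι → Matrix n n ℂ)
    (hK : ∑ u, (K u)ᴴ * K u = 1) :
    (((∑ u, (K u)ᴴ * C u)ᴴ * (∑ u, (K u)ᴴ * C u)).trace).re
      ≤ (∑ u, ((C u)ᴴ * C u).trace).re := by
  set S := ∑ u, (K u)ᴴ * C u with hS
  have hSH : Sᴴ = ∑ u, (C u)ᴴ * K u := by
    rw [hS, conjTranspose_sum]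
    simp [Matrix.conjTranspose_mul]
  have expand : ∑ u, ((C u - K u * S)ᴴ * (C u - K u * S)).trace
      = (∑ u, ((C u)ᴴ * C u).trace) - (Sᴴ * S).trace := by
    have e1 : ∀ u, ((C u - K u * S)ᴴ * (C u - K u * S)).trace
        = ((C u)ᴴ * C u).trace - ((C u)ᴴ * (K u * S)).trace
          - ((K u * S)ᴴ * C u).trace + ((K u * S)ᴴ * (K u * S)).trace := by
      intro u
      simp only [Matrix.conjTranspose_sub, Matrix.sub_mul, Matrix.mul_sub, Matrix.trace_sub]
      ring
    rw [Finset.sum_congr rfl (fun u _ => e1 u)]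
    have h2 : ∑ u, ((C u)ᴴ * (K u * S)).trace = (Sᴴ * S).trace := by
      have e : ∀ u, (C u)ᴴ * (K u * S) = ((C u)ᴴ * K u) * S := fun u => by rw [mul_assoc]
      rw [← Matrix.trace_sum, Finset.sum_congr rfl (fun u _ => e u), ← Finset.sum_mul, ← hSH]
    have h3 : ∑ u, ((K u * S)ᴴ * C u).trace = (Sᴴ * S).trace := by
      have : ∀ u, ((K u * S)ᴴ * C u).trace = (Sᴴ * ((K u)ᴴ * C u)).trace := by
        intro u
        rw [Matrix.conjTranspose_mul]
        simp [mul_assoc]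
      rw [Finset.sum_congr rfl (fun u _ => this u), ← Matrix.trace_sum, ← Matrix.mul_sum, ← hS]
    have h4 : ∑ u, ((K u * S)ᴴ * (K u * S)).trace = (Sᴴ * S).trace := by
      have : ∀ u, ((K u * S)ᴴ * (K u * S)).trace = ((Sᴴ * ((K u)ᴴ * K u)) * S).trace := by
        intro u
        rw [Matrix.conjTranspose_mul]
        simp [mul_assoc]
      rw [Finset.sum_congr rfl (fun u _ => this u), ← Matrix.trace_sum, ← Matrix.sum_mul,
        ← Matrix.mul_sum, hK, mul_one]
    simp only [Finset.sum_sub_distrib, Finset.sum_add_distrib, h2, h3, h4]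
    ring
  have pos : 0 ≤ ((∑ u, ((C u - K u * S)ᴴ * (C u - K u * S)).trace)).re := by
    rw [Complex.re_sum]
    exact Finset.sum_nonneg fun u _ => trace_self_re_nonneg _
  rw [expand] at pos
  simp only [Complex.sub_re] at pos
  linarith

end traceAux

section equivAux
variable {n : Type*} [Fintype n] [DecidableEq n]

/-- Conjugation `A ↦ L * A * R` followed by flattening, as a linear equivalence to
Euclidean space. -/
noncomputable def matEquiv (L R L' R' : Matrix n n ℂ) (h1 : L' * L = 1) (h2 : R * R' = 1) :
    Matrix n n ℂ ≃ₗ[ℂ] EuclideanSpace ℂ (n × n) where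
  toFun A := WithLp.toLp 2 (fun p : n × n => (L * A * R) p.1 p.2)
  invFun x := L' * (Matrix.of fun i j => x (i, j)) * R'
  map_add' A B := by
    ext p
    show (L * (A + B) * R) p.1 p.2 = (L * A * R) p.1 p.2 + (L * B * R) p.1 p.2
    rw [Matrix.mul_add, Matrix.add_mul]
    rfl
  map_smul' c A := by
    ext p
    show (L * (c • A) * R) p.1 p.2 = c * (L * A * R) p.1 p.2
    rw [Matrix.mul_smul, Matrix.smul_mul]
    rfl
  left_inv A := by
    show L' * (Matrix.of fun i j => (L * A * R) i j) * R' = A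
    have : (Matrix.of fun i j => (L * A * R) i j) = L * A * R := rfl
    rw [this]
    calc L' * (L * A * R) * R' = (L' * L) * A * (R * R') := by simp only [mul_assoc]
    _ = A := by rw [h1, h2, one_mul, mul_one]
  right_inv x := by
    ext p
    show (L * (L' * (Matrix.of fun i j => x (i, j)) * R') * R) p.1 p.2 = x p
    have hL : L * L' = 1 := mul_eq_one_comm.mp h1
    have hR : R' * R = 1 := mul_eq_one_comm.mp h2
    have : L * (L' * (Matrix.of fun i j => x (i, j)) * R') * R
        = (L * L') * (Matrix.of fun i j => x (i, j)) * (R' * R) := by simp only [mul_assoc]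
    rw [this, hL, hR, one_mul, mul_one]
    rfl

lemma matEquiv_inner (L R L' R' : Matrix n n ℂ) (h1 : L' * L = 1) (h2 : R * R' = 1)
    (A B : Matrix n n ℂ) :
    (inner ℂ (matEquiv L R L' R' h1 h2 A) (matEquiv L R L' R' h1 h2 B) : ℂ)
      = ((L * A * R)ᴴ * (L * B * R)).trace := by
  rw [trace_form, PiLp.inner_apply, Fintype.sum_prod_type]
  conv_lhs => rw [Finset.sum_comm]
  simp only [RCLike.inner_apply]
  refine Finset.sum_congr rfl fun j _ => Finset.sum_congr rfl fun i _ => ?_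
  rw [mul_comm]
  rfl

end equivAux

section spectralAux
variable {E : Type*} [NormedAddCommGroup E] [InnerProductSpace ℂ E] [FiniteDimensional ℂ E]

lemma symm_repr_apply (T : E →ₗ[ℂ] E) (hT : T.IsSymmetric) (x : E) (i : Fin (Module.finrank ℂ E)) :
    (hT.eigenvectorBasis rfl).repr (T x) i
      = hT.eigenvalues rfl i * (hT.eigenvectorBasis rfl).repr x i :=
  hT.eigenvectorBasis_apply_self_apply rfl x i

lemma symm_contract (T : E →ₗ[ℂ] E) (hT : T.IsSymmetric)
    (hb : ∀ (μ : ℝ) (x : E), x ≠ 0 → T x = (μ : ℂ) • x → μ ^ 2 ≤ 1) (x : E) :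
    (inner ℂ (T x) (T x) : ℂ).re ≤ (inner ℂ x x : ℂ).re := by
  set b := hT.eigenvectorBasis rfl with hb'
  have h1 : (inner ℂ (T x) (T x) : ℂ) = inner ℂ (b.repr (T x)) (b.repr (T x)) :=
    (b.repr.inner_map_map _ _).symm
  have h2 : (inner ℂ x x : ℂ) = inner ℂ (b.repr x) (b.repr x) :=
    (b.repr.inner_map_map _ _).symm
  rw [h1, h2, PiLp.inner_apply, PiLp.inner_apply, Complex.re_sum, Complex.re_sum]
  refine Finset.sum_le_sum fun i _ => ?_
  have hr : b.repr (T x) i = hT.eigenvalues rfl i * b.repr x i := symm_repr_apply T hT x i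
  have hnsq : ∀ z : ℂ, (inner ℂ z z : ℂ).re = Complex.normSq z := by
    intro z
    rw [RCLike.inner_apply, Complex.mul_conj]
    simp
  rw [hnsq, hnsq, hr]
  have hμ : (hT.eigenvalues rfl i) ^ 2 ≤ 1 := by
    refine hb (hT.eigenvalues rfl i) (b i) ?_ ?_
    · exact b.toBasis.ne_zero i
    · exact hT.apply_eigenvectorBasis rfl i
  rw [Complex.normSq_mul]
  have h3 : Complex.normSq ((hT.eigenvalues rfl i : ℂ)) = (hT.eigenvalues rfl i) ^ 2 := by
    simp [Complex.normSq_apply, sq]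
  rw [h3]
  nlinarith [Complex.normSq_nonneg (b.repr x i)]

lemma symm_nonneg (T : E →ₗ[ℂ] E) (hT : T.IsSymmetric)
    (hb : ∀ (μ : ℝ) (x : E), x ≠ 0 → T x = (μ : ℂ) • x → 0 ≤ μ) (x : E) :
    0 ≤ (inner ℂ x (T x) : ℂ).re := by
  set b := hT.eigenvectorBasis rfl with hb'
  have h1 : (inner ℂ x (T x) : ℂ) = inner ℂ (b.repr x) (b.repr (T x)) :=
    (b.repr.inner_map_map _ _).symm
  rw [h1, PiLp.inner_apply, Complex.re_sum]
  refine Finset.sum_nonneg fun i _ => ?_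
  have hr : b.repr (T x) i = hT.eigenvalues rfl i * b.repr x i := symm_repr_apply T hT x i
  rw [hr, RCLike.inner_apply]
  have : (hT.eigenvalues rfl i : ℂ) * b.repr x i * (starRingEnd ℂ) (b.repr x i)
      = (hT.eigenvalues rfl i : ℂ) * ((Complex.normSq (b.repr x i) : ℝ) : ℂ) := by
    rw [← Complex.mul_conj (b.repr x i)]
    ring
  rw [this, Complex.re_ofReal_mul]
  have hμ : 0 ≤ hT.eigenvalues rfl i := by
    exact hb (hT.eigenvalues rfl i) (b i) (b.toBasis.ne_zero i)
      (hT.apply_eigenvectorBasis rfl i)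
  have := Complex.normSq_nonneg (b.repr x i)
  positivity
end spectralAux

section viaEquiv
variable {V : Type*} [AddCommGroup V] [Module ℂ V]
variable {E : Type*} [NormedAddCommGroup E] [InnerProductSpace ℂ E] [FiniteDimensional ℂ E]

lemma contract_via_equiv (e : V ≃ₗ[ℂ] E) (f : V →ₗ[ℂ] V)
    (hsym : ∀ A B : V, (inner ℂ (e (f A)) (e B) : ℂ) = inner ℂ (e A) (e (f B)))
    (hb : ∀ (μ : ℝ) (A : V), A ≠ 0 → f A = (μ : ℂ) • A → μ ^ 2 ≤ 1) (A : V) :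
    (inner ℂ (e (f A)) (e (f A)) : ℂ).re ≤ (inner ℂ (e A) (e A) : ℂ).re := by
  set T : E →ₗ[ℂ] E := e.toLinearMap ∘ₗ f ∘ₗ e.symm.toLinearMap with hTdef
  have hTapp : ∀ B : V, T (e B) = e (f B) := by
    intro B
    rw [hTdef]
    simp
  have hTsym : T.IsSymmetric := by
    intro x y
    rw [← e.apply_symm_apply x, ← e.apply_symm_apply y, hTapp, hTapp]
    exact hsym _ _
  have hTb : ∀ (μ : ℝ) (x : E), x ≠ 0 → T x = (μ : ℂ) • x → μ ^ 2 ≤ 1 := by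
    intro μ x hx hT
    refine hb μ (e.symm x) (fun h => hx ?_) ?_
    · rw [← e.apply_symm_apply x, h, map_zero]
    · apply e.injective
      have h1 := hTapp (e.symm x)
      rw [e.apply_symm_apply] at h1
      rw [← h1, hT, _root_.map_smul, e.apply_symm_apply]
  have := symm_contract T hTsym hTb (e A)
  rwa [hTapp] at this

lemma nonneg_via_equiv (e : V ≃ₗ[ℂ] E) (f : V →ₗ[ℂ] V)
    (hsym : ∀ A B : V, (inner ℂ (e (f A)) (e B) : ℂ) = inner ℂ (e A) (e (f B)))
    (hb : ∀ (μ : ℝ) (A : V), A ≠ 0 → f A = (μ : ℂ) • A → 0 ≤ μ) (A : V) :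
    0 ≤ (inner ℂ (e A) (e (f A)) : ℂ).re := by
  set T : E →ₗ[ℂ] E := e.toLinearMap ∘ₗ f ∘ₗ e.symm.toLinearMap with hTdef
  have hTapp : ∀ B : V, T (e B) = e (f B) := by
    intro B
    rw [hTdef]
    simp
  have hTsym : T.IsSymmetric := by
    intro x y
    rw [← e.apply_symm_apply x, ← e.apply_symm_apply y, hTapp, hTapp]
    exact hsym _ _
  have hTb : ∀ (μ : ℝ) (x : E), x ≠ 0 → T x = (μ : ℂ) • x → 0 ≤ μ := by
    intro μ x hx hT
    refine hb μ (e.symm x) (fun h => hx ?_) ?_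
    · rw [← e.apply_symm_apply x, h, map_zero]
    · apply e.injective
      have h1 := hTapp (e.symm x)
      rw [e.apply_symm_apply] at h1
      rw [← h1, hT, _root_.map_smul, e.apply_symm_apply]
  have := symm_nonneg T hTsym hTb (e A)
  rwa [hTapp] at this
end viaEquiv

/-- Detailed-balanced measurements do not decrease the spectral gap: if `N` satisfies a
spectral-gap inequality with gap `g` on the orthogonal complement of the identity (for the
weighted inner product), then so does `M ∘ N ∘ M`, i.e. `gap(M∘N∘M) ≥ gap(N)`. -/
theorem gap_MNM_ge_gap_N {n ι κ : Type*} [Fintype n] [DecidableEq n]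
    [Fintype ι] [Fintype κ]
    (ρ : Matrix n n ℂ) (hρ : ρ.PosDef) (htr : ρ.trace = 1)
    (s : ℝ) (hs : s ∈ Set.Icc (0 : ℝ) 1)
    (M Mdual N Ndual : Matrix n n ℂ →ₗ[ℂ] Matrix n n ℂ)
    (KM : ι → Matrix n n ℂ) (KN : κ → Matrix n n ℂ)
    (hM : ∀ X : Matrix n n ℂ, M X = ∑ u, KM u * X * (KM u)ᴴ)
    (hMTP : ∑ u, (KM u)ᴴ * KM u = 1)
    (hMdual : ∀ X : Matrix n n ℂ, Mdual X = ∑ u, (KM u)ᴴ * X * KM u)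
    (hN : ∀ X : Matrix n n ℂ, N X = ∑ u, KN u * X * (KN u)ᴴ)
    (hNTP : ∑ u, (KN u)ᴴ * KN u = 1)
    (hNdual : ∀ X : Matrix n n ℂ, Ndual X = ∑ u, (KN u)ᴴ * X * KN u)
    (hMDB : ∀ A B : Matrix n n ℂ,
      wInner ρ hρ.1 s A (Mdual B) = wInner ρ hρ.1 s (Mdual A) B)
    (hNDB : ∀ A B : Matrix n n ℂ,
      wInner ρ hρ.1 s A (Ndual B) = wInner ρ hρ.1 s (Ndual A) B)
    (hfix : N ρ = ρ)
    (hunique : ∀ σ : Matrix n n ℂ, σ.PosSemidef → σ.trace = 1 → N σ = σ → σ = ρ)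
    (hspec : ∀ (μ : ℂ) (X : Matrix n n ℂ), X ≠ 0 → N X = μ • X →
      μ.im = 0 ∧ 0 ≤ μ.re ∧ μ.re ≤ 1)
    (g : ℝ)
    (hgapN : ∀ X : Matrix n n ℂ, wInner ρ hρ.1 s X 1 = 0 →
      (wInner ρ hρ.1 s X (Ndual X)).re ≤ (1 - g) * (wInner ρ hρ.1 s X X).re) :
    ∀ X : Matrix n n ℂ, wInner ρ hρ.1 s X 1 = 0 →
      (wInner ρ hρ.1 s X (Mdual (Ndual (Mdual X)))).re
        ≤ (1 - g) * (wInner ρ hρ.1 s X X).re := by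
  intro X hX
  -- matrix powers
  set L := mpow ρ hρ.1 ((1 - s) / 2) with hLdef
  set R := mpow ρ hρ.1 (s / 2) with hRdef
  set L' := mpow ρ hρ.1 (-((1 - s) / 2)) with hL'def
  set R' := mpow ρ hρ.1 (-(s / 2)) with hR'def
  have hL : L' * L = 1 := by
    rw [hL'def, hLdef, mpow_add_s10 hρ]
    have h : -((1 - s) / 2) + (1 - s) / 2 = 0 := by ring
    rw [h, mpow_zero_s10 hρ]
  have hR : R * R' = 1 := by
    rw [hRdef, hR'def, mpow_add_s10 hρ]
    have h : s / 2 + -(s / 2) = 0 := by ring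
    rw [h, mpow_zero_s10 hρ]
  have hLL : L * L = mpow ρ hρ.1 (1 - s) := by
    rw [hLdef, mpow_add_s10 hρ]
    have h : (1 - s) / 2 + (1 - s) / 2 = 1 - s := by ring
    rw [h]
  have hRR : R * R = mpow ρ hρ.1 s := by
    rw [hRdef, mpow_add_s10 hρ]
    have h : s / 2 + s / 2 = s := by ring
    rw [h]
  have hLh : Lᴴ = L := mpow_herm_s10 hρ _
  have hRh : Rᴴ = R := mpow_herm_s10 hρ _
  set e := matEquiv L R L' R' hL hR with hedef
  have key : ∀ A B : Matrix n n ℂ, (inner ℂ (e A) (e B) : ℂ) = wInner ρ hρ.1 s A B := by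
    intro A B
    rw [hedef, matEquiv_inner]
    have e1 : (L * A * R)ᴴ * (L * B * R) = R * ((Aᴴ * mpow ρ hρ.1 (1 - s) * B) * R) := by
      rw [conjTranspose_mul, conjTranspose_mul, hLh, hRh, ← hLL]
      simp only [mul_assoc]
    rw [e1, Matrix.trace_mul_comm, mul_assoc, hRR]
    rfl
  have hw_trace : ∀ A : Matrix n n ℂ,
      wInner ρ hρ.1 s A A = ((L * A * R)ᴴ * (L * A * R)).trace := by
    intro A
    rw [← key A A, hedef, matEquiv_inner]
  have hLAR_ne : ∀ A : Matrix n n ℂ, A ≠ 0 → L * A * R ≠ 0 := by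
    intro A hA h0
    apply hA
    have h1 : L' * (L * A * R) * R' = A := by
      calc L' * (L * A * R) * R' = (L' * L) * A * (R * R') := by simp only [mul_assoc]
      _ = A := by rw [hL, hR, one_mul, mul_one]
    rw [h0, mul_zero, zero_mul] at h1
    exact h1.symm
  have hMd1 : Mdual 1 = 1 := by
    rw [hMdual]
    simp only [mul_one]
    exact hMTP
  have hone : ∀ B : Matrix n n ℂ, wInner ρ hρ.1 s 1 B = (B * ρ).trace := by
    intro B
    show ((1 : Matrix n n ℂ)ᴴ * mpow ρ hρ.1 (1 - s) * B * mpow ρ hρ.1 s).trace = (B * ρ).trace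
    rw [conjTranspose_one, one_mul, Matrix.trace_mul_comm, ← mul_assoc, mpow_add_s10 hρ]
    have h1 : s + (1 - s) = 1 := by ring
    rw [h1, mpow_one hρ, Matrix.trace_mul_comm]
  have htrfix : ∀ B : Matrix n n ℂ, (Mdual B * ρ).trace = (B * ρ).trace := by
    intro B
    have h1 := hMDB 1 B
    rw [hMd1] at h1
    rw [hone, hone] at h1
    exact h1
  have hMρ : ∑ u, KM u * ρ * (KM u)ᴴ = ρ := by
    have hD : ∀ B : Matrix n n ℂ,
        (B * (∑ u, KM u * ρ * (KM u)ᴴ)).trace = (B * ρ).trace := by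
      intro B
      have h1 := htrfix B
      rw [hMdual, Finset.sum_mul, Matrix.trace_sum] at h1
      rw [Matrix.mul_sum, Matrix.trace_sum, ← h1]
      refine Finset.sum_congr rfl fun u _ => ?_
      have h2 : B * (KM u * ρ * (KM u)ᴴ) = (B * (KM u * ρ)) * (KM u)ᴴ := by
        simp only [mul_assoc]
      rw [h2, Matrix.trace_mul_comm]
      simp only [← mul_assoc]
    have hsub : ((∑ u, KM u * ρ * (KM u)ᴴ) - ρ)ᴴ * ((∑ u, KM u * ρ * (KM u)ᴴ) - ρ) =
        ((∑ u, KM u * ρ * (KM u)ᴴ) - ρ)ᴴ * (∑ u, KM u * ρ * (KM u)ᴴ)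
          - ((∑ u, KM u * ρ * (KM u)ᴴ) - ρ)ᴴ * ρ := by
      rw [Matrix.mul_sub]
    have h0 : (((∑ u, KM u * ρ * (KM u)ᴴ) - ρ)ᴴ * ((∑ u, KM u * ρ * (KM u)ᴴ) - ρ)).trace = 0 := by
      rw [hsub, Matrix.trace_sub, hD, sub_self]
    exact sub_eq_zero.mp (trace_self_eq_zero_iff h0)
  -- square root of ρ
  set W := mpow ρ hρ.1 (1 / 2 : ℝ) with hWdef
  have hWW : W * W = ρ := by
    rw [hWdef, mpow_add_s10 hρ]
    have h : (1 : ℝ) / 2 + 1 / 2 = 1 := by norm_num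
    rw [h, mpow_one hρ]
  have hWh : Wᴴ = W := mpow_herm_s10 hρ _
  have hWW' : W * mpow ρ hρ.1 (-(1 / 2) : ℝ) = 1 := by
    rw [hWdef, mpow_add_s10 hρ]
    have h : (1 : ℝ) / 2 + -(1 / 2) = 0 := by norm_num
    rw [h, mpow_zero_s10 hρ]
  -- eigenvalue bound for Mdual
  have hMd_eig : ∀ (μ : ℝ) (A : Matrix n n ℂ), A ≠ 0 → Mdual A = (μ : ℂ) • A → μ ^ 2 ≤ 1 := by
    intro μ A hA hMA
    have hAW : A * W ≠ 0 := by
      intro h0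
      apply hA
      have h1 : A * W * mpow ρ hρ.1 (-(1 / 2) : ℝ) = A := by
        rw [mul_assoc, hWW', mul_one]
      rw [h0, zero_mul] at h1
      exact h1.symm
    have hs' := schwarz_trace KM (fun u => A * KM u * W) hMTP
    have hS : ∑ u, (KM u)ᴴ * (A * KM u * W) = Mdual A * W := by
      rw [hMdual, Finset.sum_mul]
      exact Finset.sum_congr rfl fun u _ => by simp only [mul_assoc]
    rw [hS] at hs'
    have h9 : ((A * W)ᴴ * (A * W)).trace = ((Aᴴ * A) * ρ).trace := by
      have h10 : (A * W)ᴴ * (A * W) = W * (Aᴴ * (A * W)) := by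
        rw [conjTranspose_mul, hWh]
        simp only [mul_assoc]
      rw [h10, Matrix.trace_mul_comm]
      have h11 : Aᴴ * (A * W) * W = (Aᴴ * A) * (W * W) := by simp only [mul_assoc]
      rw [h11, hWW]
    have hR1 : ∀ u, ((A * KM u * W)ᴴ * (A * KM u * W)).trace
        = ((Aᴴ * A) * (KM u * ρ * (KM u)ᴴ)).trace := by
      intro u
      have h6 : (A * KM u * W)ᴴ * (A * KM u * W)
          = W * ((KM u)ᴴ * (Aᴴ * (A * (KM u * W)))) := by
        rw [conjTranspose_mul, conjTranspose_mul, hWh]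
        simp only [mul_assoc]
      rw [h6, Matrix.trace_mul_comm]
      have h7 : (KM u)ᴴ * (Aᴴ * (A * (KM u * W))) * W
          = (KM u)ᴴ * ((Aᴴ * A) * (KM u * (W * W))) := by
        simp only [mul_assoc]
      rw [h7, Matrix.trace_mul_comm]
      have h8 : (Aᴴ * A) * (KM u * (W * W)) * (KM u)ᴴ
          = (Aᴴ * A) * (KM u * (W * W) * (KM u)ᴴ) := by
        simp only [mul_assoc]
      rw [h8, hWW]
    have hsum : (∑ u, ((A * KM u * W)ᴴ * (A * KM u * W)).trace)
        = ((A * W)ᴴ * (A * W)).trace := by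
      rw [Finset.sum_congr rfl fun u _ => hR1 u, ← Matrix.trace_sum, ← Matrix.mul_sum, hMρ]
      exact h9.symm
    rw [hsum] at hs'
    have hL1 : (Mdual A * W)ᴴ * (Mdual A * W)
        = ((μ : ℂ) * (μ : ℂ)) • ((A * W)ᴴ * (A * W)) := by
      rw [hMA, smul_mul_assoc, conjTranspose_smul, smul_mul_assoc, mul_smul_comm, smul_smul]
      congr 1
      rw [Complex.star_def, Complex.conj_ofReal]
    rw [hL1, Matrix.trace_smul, smul_eq_mul, ← Complex.ofReal_mul, Complex.re_ofReal_mul] at hs'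
    have ht := trace_self_re_pos hAW
    nlinarith [hs', ht]
  -- trace duality for N
  have hNdual_tr : ∀ P Q : Matrix n n ℂ, ((Ndual P)ᴴ * Q).trace = (Pᴴ * (N Q)).trace := by
    intro P Q
    rw [hNdual P, hN Q, conjTranspose_sum, Finset.sum_mul, Matrix.trace_sum,
      Matrix.mul_sum, Matrix.trace_sum]
    refine Finset.sum_congr rfl fun u _ => ?_
    simp only [conjTranspose_mul, conjTranspose_conjTranspose, mul_assoc]
    rw [Matrix.trace_mul_comm]
    simp only [mul_assoc]
  -- eigenvalue bound for Ndual
  have hNd_eig : ∀ (μ : ℝ) (A : Matrix n n ℂ), A ≠ 0 → Ndual A = (μ : ℂ) • A → 0 ≤ μ := by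
    intro μ A hA hNA
    by_cases hinj : Function.Injective
        (N - (μ : ℂ) • LinearMap.id : Matrix n n ℂ →ₗ[ℂ] Matrix n n ℂ)
    · exfalso
      have hsurj := LinearMap.injective_iff_surjective.mp hinj
      obtain ⟨B, hB⟩ := hsurj A
      have hB' : N B - (μ : ℂ) • B = A := by
        simpa [LinearMap.sub_apply, LinearMap.smul_apply] using hB
      have htr0 : (Aᴴ * A).trace = 0 := by
        have h1 : Aᴴ * A = Aᴴ * (N B) - (μ : ℂ) • (Aᴴ * B) := by
          rw [← hB', Matrix.mul_sub, mul_smul_comm]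
        have h2 : (Aᴴ * (N B)).trace = (μ : ℂ) * (Aᴴ * B).trace := by
          rw [← hNdual_tr, hNA, conjTranspose_smul, smul_mul_assoc, Matrix.trace_smul,
            smul_eq_mul, Complex.star_def, Complex.conj_ofReal]
        rw [h1, Matrix.trace_sub, h2, Matrix.trace_smul, smul_eq_mul, sub_self]
      exact hA (trace_self_eq_zero_iff htr0)
    · rw [Function.not_injective_iff] at hinj
      obtain ⟨P, Q, hPQ, hne⟩ := hinj
      have h0 : (N - (μ : ℂ) • LinearMap.id : Matrix n n ℂ →ₗ[ℂ] Matrix n n ℂ) (P - Q) = 0 := by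
        rw [map_sub, hPQ, sub_self]
      have h1 : N (P - Q) - (μ : ℂ) • (P - Q) = 0 := by
        simpa [LinearMap.sub_apply, LinearMap.smul_apply] using h0
      have hZ : N (P - Q) = (μ : ℂ) • (P - Q) := by
        rw [sub_eq_zero] at h1
        exact h1
      have := hspec (μ : ℂ) (P - Q) (sub_ne_zero.mpr hne) hZ
      simpa using this.2.1
  -- transfer to the inner product space
  have hMsym_e : ∀ A B : Matrix n n ℂ,
      (inner ℂ (e (Mdual A)) (e B) : ℂ) = inner ℂ (e A) (e (Mdual B)) := by
    intro A B
    rw [key, key, ← hMDB]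
  have hNsym_e : ∀ A B : Matrix n n ℂ,
      (inner ℂ (e (Ndual A)) (e B) : ℂ) = inner ℂ (e A) (e (Ndual B)) := by
    intro A B
    rw [key, key, ← hNDB]
  have hcontract : (wInner ρ hρ.1 s (Mdual X) (Mdual X)).re ≤ (wInner ρ hρ.1 s X X).re := by
    have h := contract_via_equiv e Mdual hMsym_e hMd_eig X
    rw [key, key] at h
    exact h
  have hY1 : wInner ρ hρ.1 s (Mdual X) 1 = 0 := by
    rw [← hMDB X 1, hMd1]
    exact hX
  have step1 : wInner ρ hρ.1 s X (Mdual (Ndual (Mdual X)))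
      = wInner ρ hρ.1 s (Mdual X) (Ndual (Mdual X)) := hMDB X _
  have step2 := hgapN (Mdual X) hY1
  by_cases hg : g ≤ 1
  · rw [step1]
    refine le_trans step2 ?_
    exact mul_le_mul_of_nonneg_left hcontract (by linarith)
  · push_neg at hg
    by_cases hX0 : X = 0
    · subst hX0
      have hz : ∀ B : Matrix n n ℂ, wInner ρ hρ.1 s 0 B = 0 := by
        intro B
        show ((0 : Matrix n n ℂ)ᴴ * mpow ρ hρ.1 (1 - s) * B * mpow ρ hρ.1 s).trace = 0
        simp
      rw [hz, hz]
      simp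
    · exfalso
      have hpos : 0 < (wInner ρ hρ.1 s X X).re := by
        rw [hw_trace X]
        exact trace_self_re_pos (hLAR_ne X hX0)
      have hnn : 0 ≤ (wInner ρ hρ.1 s X (Ndual X)).re := by
        have h := nonneg_via_equiv e Ndual hNsym_e hNd_eig X
        rw [key] at h
        exact h
      have h3 := hgapN X hX
      nlinarith
end

section
/- Let N be a quantum channel satisfying KMS (s=1/2) detailed balance with respect to a full-rank Gibbs state ρ, having ρ as its unique fixed state and spectrum in [0,1] with spectral gap Δ. Then the mixing time satisfies the lower bound (1/Δ − 1)·log(1/ε) ≤ t_mix(ε), where t_mix(ε) is the least t such that ‖N^t(σ) − ρ‖₁ ≤ ε for all states σ. -/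
open Matrix
open scoped ComplexOrder

/-- The trace (Schatten 1) norm of a complex square matrix. -/
noncomputable def traceNorm {n : Type*} [Fintype n] [DecidableEq n] (A : Matrix n n ℂ) : ℝ :=
  (((Matrix.posSemidef_conjTranspose_mul_self A).1.eigenvectorUnitary.1 *
      diagonal (((↑) : ℝ → ℂ) ∘ (√·) ∘ (Matrix.posSemidef_conjTranspose_mul_self A).1.eigenvalues) *
      (star (Matrix.posSemidef_conjTranspose_mul_self A).1.eigenvectorUnitary : Matrix n n ℂ)).trace).re

section helpers
variable {n : Type*} [Fintype n] [DecidableEq n]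

lemma spectral_theorem_old {A : Matrix n n ℂ} (hA : A.IsHermitian) :
    A = (hA.eigenvectorUnitary : Matrix n n ℂ) * diagonal (RCLike.ofReal ∘ hA.eigenvalues) *
      star (hA.eigenvectorUnitary : Matrix n n ℂ) := by
  exact hA.spectral_theorem

lemma psd_diag_nonneg {M : Matrix n n ℂ} (hM : M.PosSemidef) (j : n) : 0 ≤ M j j := by
  have h := hM.diag_nonneg (i := j)
  simpa [dotProduct, Matrix.mulVec, Pi.single_apply, Finset.sum_ite_eq,
    Finset.mul_sum] using h

lemma conj_psd {W : Matrix n n ℂ} (hW : W.IsHermitian) (c : ℝ)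
    (hc : ∀ i, |hW.eigenvalues i| ≤ c) :
    ((c : ℂ) • 1 - W).PosSemidef ∧ ((c : ℂ) • 1 + W).PosSemidef := by
  classical
  set V : Matrix n n ℂ := (hW.eigenvectorUnitary : Matrix n n ℂ) with hVdef
  have hV : V * star V = 1 := Matrix.mem_unitaryGroup_iff.mp hW.eigenvectorUnitary.2
  have hdiag : ∀ (f : n → ℝ), (Matrix.diagonal (fun i => ((f i : ℝ) : ℂ)) : Matrix n n ℂ)
      = Matrix.diagonal (RCLike.ofReal ∘ f) := by
    intro f; rfl
  constructor
  · have heq : (c : ℂ) • 1 - W =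
        V * Matrix.diagonal (fun i => ((c - hW.eigenvalues i : ℝ) : ℂ)) * star V := by
      have h1 : Matrix.diagonal (fun i => ((c - hW.eigenvalues i : ℝ) : ℂ)) =
          (c : ℂ) • (1 : Matrix n n ℂ) - Matrix.diagonal (RCLike.ofReal ∘ hW.eigenvalues) := by
        ext i j
        by_cases h : i = j <;>
          simp [h, Matrix.diagonal_apply, Matrix.one_apply,
            show ((RCLike.ofReal : ℝ → ℂ) = Complex.ofReal) from rfl, Complex.ofReal_sub]
      rw [h1, Matrix.mul_sub, Matrix.sub_mul]
      rw [← spectral_theorem_old hW]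
      congr 1
      rw [Matrix.mul_smul, Matrix.mul_one, Matrix.smul_mul, hV]
    rw [heq]
    refine Matrix.PosSemidef.mul_mul_conjTranspose_same ?_ V
    refine Matrix.posSemidef_diagonal_iff.mpr fun i => ?_
    rw [Complex.zero_le_real]
    have := hc i
    have := abs_le.mp (hc i)
    linarith [this.2]
  · have heq : (c : ℂ) • 1 + W =
        V * Matrix.diagonal (fun i => ((c + hW.eigenvalues i : ℝ) : ℂ)) * star V := by
      have h1 : Matrix.diagonal (fun i => ((c + hW.eigenvalues i : ℝ) : ℂ)) =
          (c : ℂ) • (1 : Matrix n n ℂ) + Matrix.diagonal (RCLike.ofReal ∘ hW.eigenvalues) := by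
        ext i j
        by_cases h : i = j <;>
          simp [h, Matrix.diagonal_apply, Matrix.one_apply,
            show ((RCLike.ofReal : ℝ → ℂ) = Complex.ofReal) from rfl, Complex.ofReal_add]
      rw [h1, Matrix.mul_add, Matrix.add_mul]
      rw [← spectral_theorem_old hW]
      congr 1
      rw [Matrix.mul_smul, Matrix.mul_one, Matrix.smul_mul, hV]
    rw [heq]
    refine Matrix.PosSemidef.mul_mul_conjTranspose_same ?_ V
    refine Matrix.posSemidef_diagonal_iff.mpr fun i => ?_
    rw [Complex.zero_le_real]
    have := abs_le.mp (hc i)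
    linarith [this.1]

lemma traceNorm_herm {A : Matrix n n ℂ} (hA : A.IsHermitian) :
    traceNorm A = ∑ i, |hA.eigenvalues i| := by
  classical
  set U : Matrix n n ℂ := (hA.eigenvectorUnitary : Matrix n n ℂ) with hUdef
  have hU : U * star U = 1 := Matrix.mem_unitaryGroup_iff.mp hA.eigenvectorUnitary.2
  have hU' : star U * U = 1 := Matrix.mem_unitaryGroup_iff'.mp hA.eigenvectorUnitary.2
  set S : Matrix n n ℂ :=
    U * Matrix.diagonal (fun i => ((|hA.eigenvalues i| : ℝ) : ℂ)) * star U with hSdef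
  have hSpsd : S.PosSemidef := by
    refine Matrix.PosSemidef.mul_mul_conjTranspose_same ?_ U
    refine Matrix.posSemidef_diagonal_iff.mpr fun i => ?_
    rw [Complex.zero_le_real]
    exact abs_nonneg _
  have hsq : S ^ 2 = Aᴴ * A := by
    have hst := spectral_theorem_old hA
    rw [pow_two, hSdef, hA.eq]
    calc U * Matrix.diagonal (fun i => ((|hA.eigenvalues i| : ℝ) : ℂ)) * star U *
          (U * Matrix.diagonal (fun i => ((|hA.eigenvalues i| : ℝ) : ℂ)) * star U)
        = U * (Matrix.diagonal (fun i => ((|hA.eigenvalues i| : ℝ) : ℂ)) *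
            (star U * U) * Matrix.diagonal (fun i => ((|hA.eigenvalues i| : ℝ) : ℂ))) * star U := by
          noncomm_ring
      _ = U * Matrix.diagonal (RCLike.ofReal ∘ hA.eigenvalues) * star U *
          (U * Matrix.diagonal (RCLike.ofReal ∘ hA.eigenvalues) * star U) := by
          rw [hU', mul_one, Matrix.diagonal_mul_diagonal]
          have : (Matrix.diagonal (RCLike.ofReal ∘ hA.eigenvalues) : Matrix n n ℂ) *
              (star U * U) * Matrix.diagonal (RCLike.ofReal ∘ hA.eigenvalues) =
              Matrix.diagonal fun i => ((|hA.eigenvalues i| : ℝ) : ℂ) * ((|hA.eigenvalues i| : ℝ) : ℂ) := by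
            rw [hU', mul_one, Matrix.diagonal_mul_diagonal]
            funext i j
            simp only [Matrix.diagonal_apply]
            split_ifs
            · simp only [Function.comp_apply]
              rw [show ((RCLike.ofReal : ℝ → ℂ) = Complex.ofReal) from rfl,
                ← Complex.ofReal_mul, ← Complex.ofReal_mul, abs_mul_abs_self]
            · rfl
          rw [← this]
          noncomm_ring
      _ = A * A := by rw [← hst]
  open scoped MatrixOrder in
  have hSeq : S = ((Matrix.posSemidef_conjTranspose_mul_self A).1.eigenvectorUnitary.1 *
      diagonal (((↑) : ℝ → ℂ) ∘ (√·) ∘ (Matrix.posSemidef_conjTranspose_mul_self A).1.eigenvalues) *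
      (star (Matrix.posSemidef_conjTranspose_mul_self A).1.eigenvectorUnitary : Matrix n n ℂ)) := by
    have hB := Matrix.posSemidef_conjTranspose_mul_self A
    have e1 : S = CFC.sqrt (Aᴴ * A) := by
      rw [eq_comm]
      exact CFC.sqrt_unique (by rw [← pow_two]; exact hsq) (Matrix.nonneg_iff_posSemidef.mpr hSpsd)
    rw [e1, CFC.sqrt_eq_real_sqrt _ (Matrix.nonneg_iff_posSemidef.mpr hB), cfcₙ_eq_cfc,
      hB.1.cfc_eq]
    rfl
  rw [traceNorm, ← hSeq, hSdef]
  rw [Matrix.trace_mul_cycle, hU', Matrix.one_mul, Matrix.trace_diagonal]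
  simp

lemma abs_trace_mul_le {W A : Matrix n n ℂ} (hW : W.IsHermitian) (hA : A.IsHermitian)
    (c : ℝ) (hc : ∀ i, |hW.eigenvalues i| ≤ c) :
    ‖(W * A).trace‖ ≤ c * traceNorm A := by
  classical
  set U : Matrix n n ℂ := (hA.eigenvectorUnitary : Matrix n n ℂ) with hUdef
  have hU : U * star U = 1 := Matrix.mem_unitaryGroup_iff.mp hA.eigenvectorUnitary.2
  have hU' : star U * U = 1 := Matrix.mem_unitaryGroup_iff'.mp hA.eigenvectorUnitary.2
  set M : Matrix n n ℂ := star U * W * U with hMdef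
  -- diagonal entries of M are bounded by c
  have hMjj : ∀ j, ‖M j j‖ ≤ c := by
    intro j
    obtain ⟨h1, h2⟩ := conj_psd hW c hc
    have p1 : ((c : ℂ) • 1 - M).PosSemidef := by
      have := h1.conjTranspose_mul_mul_same (B := U)
      have heq : Uᴴ * ((c : ℂ) • 1 - W) * U = (c : ℂ) • 1 - M := by
        rw [Matrix.mul_sub, Matrix.sub_mul, Matrix.mul_smul, Matrix.mul_one, Matrix.smul_mul]
        rw [Matrix.star_eq_conjTranspose] at hU'
        rw [hU', hMdef, Matrix.star_eq_conjTranspose]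
      rwa [heq] at this
    have p2 : ((c : ℂ) • 1 + M).PosSemidef := by
      have := h2.conjTranspose_mul_mul_same (B := U)
      have heq : Uᴴ * ((c : ℂ) • 1 + W) * U = (c : ℂ) • 1 + M := by
        rw [Matrix.mul_add, Matrix.add_mul, Matrix.mul_smul, Matrix.mul_one, Matrix.smul_mul]
        rw [Matrix.star_eq_conjTranspose] at hU'
        rw [hU', hMdef, Matrix.star_eq_conjTranspose]
      rwa [heq] at this
    have e1 := psd_diag_nonneg p1 j
    have e2 := psd_diag_nonneg p2 j
    have hone : ((c : ℂ) • (1 : Matrix n n ℂ)) j j = (c : ℂ) := by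
      simp [Matrix.one_apply]
    rw [Matrix.sub_apply, hone] at e1
    rw [Matrix.add_apply, hone] at e2
    rw [Complex.le_def] at e1 e2
    simp only [Complex.zero_re, Complex.zero_im, Complex.sub_re, Complex.sub_im,
      Complex.add_re, Complex.add_im, Complex.ofReal_re, Complex.ofReal_im] at e1 e2
    have him : (M j j).im = 0 := by linarith [e1.2, e2.2]
    have : M j j = (((M j j).re : ℝ) : ℂ) := by
      apply Complex.ext <;> simp [him]
    rw [this, Complex.norm_real, Real.norm_eq_abs]
    rw [abs_le]
    constructor <;> [linarith [e2.1]; linarith [e1.1]]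
  have hkey : (W * A).trace = ∑ j, M j j * ((hA.eigenvalues j : ℝ) : ℂ) := by
    conv_lhs => rw [spectral_theorem_old hA]
    rw [← hUdef, ← Matrix.mul_assoc, Matrix.trace_mul_cycle, ← Matrix.mul_assoc]
    rw [← hMdef]
    simp [Matrix.trace, Matrix.diag, Matrix.mul_diagonal]
  rw [hkey]
  calc ‖∑ j, M j j * ((hA.eigenvalues j : ℝ) : ℂ)‖
      ≤ ∑ j, ‖M j j * ((hA.eigenvalues j : ℝ) : ℂ)‖ :=
        norm_sum_le _ _
    _ ≤ ∑ j, c * |hA.eigenvalues j| := by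
        refine Finset.sum_le_sum fun j _ => ?_
        rw [norm_mul, Complex.norm_real, Real.norm_eq_abs]
        exact mul_le_mul_of_nonneg_right (hMjj j) (abs_nonneg _)
    _ = c * traceNorm A := by rw [traceNorm_herm hA, Finset.mul_sum]

end helpers

/-- Mixing-time lower bound: for a KMS detailed-balanced quantum channel with unique fixed
state `ρ`, spectrum in `[0,1]` and spectral gap `Δ` (so `1 - Δ` is an eigenvalue of the
dual), any time `t` at which every state is `ε`-mixed satisfies
`(1/Δ − 1)·log(1/ε) ≤ t`. -/
theorem mixing_time_lower_bound {n ι : Type*} [Fintype n] [DecidableEq n] [Fintype ι]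
    (ρ : Matrix n n ℂ) (hρ : ρ.PosDef) (htr : ρ.trace = 1)
    (N Ndual : Matrix n n ℂ → Matrix n n ℂ)
    (K : ι → Matrix n n ℂ)
    (hKraus : ∀ X : Matrix n n ℂ, N X = ∑ u, K u * X * (K u)ᴴ)
    (hTP : ∑ u, (K u)ᴴ * K u = 1)
    (hdual : ∀ X : Matrix n n ℂ, Ndual X = ∑ u, (K u)ᴴ * X * K u)
    (hKMS : ∀ A B : Matrix n n ℂ,
      wInner ρ hρ.1 (1/2) A (Ndual B) = wInner ρ hρ.1 (1/2) (Ndual A) B)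
    (hfix : N ρ = ρ)
    (hunique : ∀ σ : Matrix n n ℂ, σ.PosSemidef → σ.trace = 1 → N σ = σ → σ = ρ)
    (hspec : ∀ (μ : ℂ) (X : Matrix n n ℂ), X ≠ 0 → N X = μ • X →
      μ.im = 0 ∧ 0 ≤ μ.re ∧ μ.re ≤ 1)
    (Δ : ℝ) (hΔ0 : 0 < Δ) (hΔ1 : Δ ≤ 1)
    (hgap : ∃ Z : Matrix n n ℂ, Z ≠ 0 ∧ Ndual Z = (((1 : ℝ) - Δ : ℝ) : ℂ) • Z) :
    ∀ ε : ℝ, 0 < ε → ε < 1 → ∀ t : ℕ,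
      (∀ σ : Matrix n n ℂ, σ.PosSemidef → σ.trace = 1 →
        traceNorm (N^[t] σ - ρ) ≤ ε) →
      (1 / Δ - 1) * Real.log (1 / ε) ≤ (t : ℝ) := by
  intro ε hε0 hε1 t ht
  have hne : Nonempty n := by
    by_contra h
    rw [not_nonempty_iff] at h
    rw [Matrix.trace] at htr
    simp [Finset.univ_eq_empty] at htr
  classical
  obtain ⟨Z, hZne, hZeig⟩ := hgap
  set r : ℂ := (((1 : ℝ) - Δ : ℝ) : ℂ) with hrdef
  have hSub : ∀ X Y, Ndual (X - Y) = Ndual X - Ndual Y := by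
    intro X Y
    simp [hdual, Matrix.mul_sub, Matrix.sub_mul, Finset.sum_sub_distrib]
  have hAdd : ∀ X Y, Ndual (X + Y) = Ndual X + Ndual Y := by
    intro X Y
    simp [hdual, Matrix.mul_add, Matrix.add_mul, Finset.sum_add_distrib]
  have hSmul : ∀ (a : ℂ) X, Ndual (a • X) = a • Ndual X := by
    intro a X
    simp [hdual, Matrix.mul_smul, Matrix.smul_mul, Finset.smul_sum]
  have hdualH : ∀ X, Ndual (Xᴴ) = (Ndual X)ᴴ := by
    intro X
    rw [hdual, hdual, Matrix.conjTranspose_sum]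
    exact Finset.sum_congr rfl fun u _ => by
      simp [Matrix.conjTranspose_mul, Matrix.mul_assoc]
  have hZH : Ndual (Zᴴ) = r • Zᴴ := by
    rw [hdualH, hZeig, Matrix.conjTranspose_smul]
    congr 1
    rw [hrdef, Complex.star_def, Complex.conj_ofReal]
  obtain ⟨W, hWne, hWh, hWeig⟩ :
      ∃ W : Matrix n n ℂ, W ≠ 0 ∧ W.IsHermitian ∧ Ndual W = r • W := by
    by_cases h1 : Z + Zᴴ ≠ 0
    · refine ⟨Z + Zᴴ, h1, ?_, ?_⟩
      · rw [Matrix.IsHermitian, Matrix.conjTranspose_add, Matrix.conjTranspose_conjTranspose,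
          add_comm]
      · rw [hAdd, hZeig, hZH, smul_add]
    · push_neg at h1
      refine ⟨Complex.I • (Z - Zᴴ), ?_, ?_, ?_⟩
      · intro h0
        apply hZne
        have h2 : Z - Zᴴ = 0 := by
          have := congrArg (fun M => (-Complex.I) • M) h0
          simpa [smul_smul, Complex.I_mul_I] using this
        have h3 : (2 : ℂ) • Z = 0 := by
          have : (2 : ℂ) • Z = (Z + Zᴴ) + (Z - Zᴴ) := by module
          rw [this, h1, h2, add_zero]
        have := smul_eq_zero.mp h3
        rcases this with h | h
        · norm_num at h
        · exact h
      · rw [Matrix.IsHermitian, Matrix.conjTranspose_smul, Matrix.conjTranspose_sub,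
          Matrix.conjTranspose_conjTranspose, Complex.star_def, Complex.conj_I]
        module
      · rw [hSmul, hSub, hZeig, hZH]
        module
  have hdu : ∀ X Y, ((Ndual X) * Y).trace = (X * N Y).trace := by
    intro X Y
    rw [hdual, hKraus, Matrix.sum_mul, Matrix.mul_sum, Matrix.trace_sum, Matrix.trace_sum]
    refine Finset.sum_congr rfl fun u _ => ?_
    simp only [Matrix.mul_assoc]
    rw [Matrix.trace_mul_comm]
    simp only [Matrix.mul_assoc]
  have hstep : ∀ X, (W * N X).trace = r * (W * X).trace := by
    intro X
    rw [← hdu, hWeig, Matrix.smul_mul, Matrix.trace_smul, smul_eq_mul]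
  have hiter : ∀ (s : ℕ) (X : Matrix n n ℂ),
      (W * (N^[s] X)).trace = r ^ s * (W * X).trace := by
    intro s
    induction s with
    | zero => intro X; simp
    | succ k ih =>
        intro X
        rw [Function.iterate_succ_apply', hstep, ih, pow_succ]
        ring
  have hρ0 : (W * ρ).trace = 0 := by
    have h1 : (W * ρ).trace = r * (W * ρ).trace := by
      conv_lhs => rw [← hfix]
      rw [hstep]
    have h2 : ((1 : ℂ) - r) * (W * ρ).trace = 0 := by
      rw [sub_mul, one_mul, ← h1, sub_self]
    have h3 : (1 : ℂ) - r ≠ 0 := by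
      have : (1 : ℂ) - r = ((Δ : ℝ) : ℂ) := by rw [hrdef]; push_cast; ring
      rw [this]
      exact_mod_cast ne_of_gt hΔ0
    exact (mul_eq_zero.mp h2).resolve_left h3
  obtain ⟨j₀, -, hj₀⟩ := Finset.exists_max_image Finset.univ
    (fun i => |hWh.eigenvalues i|) Finset.univ_nonempty
  set lam : ℝ := hWh.eigenvalues j₀ with hlam
  have hj₀' : ∀ i, |hWh.eigenvalues i| ≤ |lam| := fun i => hj₀ i (Finset.mem_univ i)
  have hcpos : 0 < |lam| := by
    rcases (abs_nonneg lam).lt_or_eq with h | h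
    · exact h
    · exfalso
      apply hWne
      have hz : ∀ i, hWh.eigenvalues i = 0 := by
        intro i
        have h5 := hj₀' i
        rw [← h] at h5
        exact abs_eq_zero.mp (le_antisymm h5 (abs_nonneg _))
      rw [spectral_theorem_old hWh]
      have hd0 : Matrix.diagonal (RCLike.ofReal ∘ hWh.eigenvalues) = (0 : Matrix n n ℂ) := by
        ext i j
        by_cases hij : i = j <;> simp [Matrix.diagonal_apply, hij, hz]
      rw [hd0, Matrix.mul_zero, Matrix.zero_mul]
  set v : n → ℂ := ⇑(hWh.eigenvectorBasis j₀) with hv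
  have hWv : W *ᵥ v = lam • v := hWh.mulVec_eigenvectorBasis j₀
  have hnorm : ∑ i, (starRingEnd ℂ) (v i) * v i = 1 := by
    have h1 : (inner ℂ (hWh.eigenvectorBasis j₀) (hWh.eigenvectorBasis j₀) : ℂ) = 1 := by
      rw [inner_self_eq_norm_sq_to_K, hWh.eigenvectorBasis.orthonormal.1 j₀]
      norm_num
    rw [PiLp.inner_apply] at h1
    simpa [RCLike.inner_apply, Complex.conj_mul'] using h1
  set σ : Matrix n n ℂ := Matrix.vecMulVec v (star v) with hσ
  have hσpsd : σ.PosSemidef := by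
    rw [hσ, Matrix.vecMulVec_eq Unit, ← Matrix.conjTranspose_replicateCol]
    exact Matrix.posSemidef_self_mul_conjTranspose _
  have hσtr : σ.trace = 1 := by
    rw [hσ, Matrix.trace]
    calc ∑ i, (Matrix.vecMulVec v (star v)).diag i
        = ∑ i, (starRingEnd ℂ) (v i) * v i := by
          refine Finset.sum_congr rfl fun i _ => ?_
          simp [Matrix.vecMulVec_apply, Matrix.diag, mul_comm, Complex.star_def]
      _ = 1 := hnorm
  have hdiagWσ : ∀ i, (W * σ) i i = (starRingEnd ℂ) (v i) * ((W *ᵥ v) i) := by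
    intro i
    rw [hσ, Matrix.mul_apply, Matrix.mulVec, dotProduct, Finset.mul_sum]
    refine Finset.sum_congr rfl fun k _ => ?_
    simp only [Matrix.vecMulVec_apply, Pi.star_apply, Complex.star_def]
    ring
  have hWσ : (W * σ).trace = ((lam : ℝ) : ℂ) := by
    rw [Matrix.trace]
    calc ∑ i, (W * σ).diag i
        = ∑ i, ((lam : ℝ) : ℂ) * ((starRingEnd ℂ) (v i) * v i) := by
          refine Finset.sum_congr rfl fun i _ => ?_
          rw [Matrix.diag_apply, hdiagWσ i, hWv]
          simp [Complex.real_smul]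
          ring
      _ = ((lam : ℝ) : ℂ) := by rw [← Finset.mul_sum, hnorm, mul_one]
  have hNherm : ∀ X : Matrix n n ℂ, X.IsHermitian → (N X).IsHermitian := by
    intro X hX
    rw [hKraus, Matrix.IsHermitian, Matrix.conjTranspose_sum]
    exact Finset.sum_congr rfl fun u _ => by
      simp [Matrix.conjTranspose_mul, hX.eq, Matrix.mul_assoc]
  have hiterherm : ∀ (s : ℕ) (X : Matrix n n ℂ), X.IsHermitian → (N^[s] X).IsHermitian := by
    intro s
    induction s with
    | zero => intro X hX; simpa using hX
    | succ k ih =>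
        intro X hX
        rw [Function.iterate_succ_apply']
        exact hNherm _ (ih X hX)
  have hAherm : (N^[t] σ - ρ).IsHermitian :=
    Matrix.IsHermitian.sub (hiterherm t σ hσpsd.1) hρ.1
  have hval : (W * (N^[t] σ - ρ)).trace = r ^ t * ((lam : ℝ) : ℂ) := by
    rw [Matrix.mul_sub, Matrix.trace_sub, hρ0, sub_zero, hiter t σ, hWσ]
  have hmain := abs_trace_mul_le hWh hAherm |lam| hj₀'
  rw [hval] at hmain
  have habs : ‖r ^ t * ((lam : ℝ) : ℂ)‖ = (1 - Δ) ^ t * |lam| := by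
    rw [norm_mul, norm_pow, hrdef, Complex.norm_real, Complex.norm_real, Real.norm_eq_abs,
      Real.norm_eq_abs,
      abs_of_nonneg (by linarith : (0 : ℝ) ≤ 1 - Δ)]
  rw [habs] at hmain
  have hbound := ht σ hσpsd hσtr
  have hqt : (1 - Δ) ^ t ≤ ε := by
    have h6 : (1 - Δ) ^ t * |lam| ≤ |lam| * ε :=
      le_trans hmain (mul_le_mul_of_nonneg_left hbound (abs_nonneg _))
    have h7 : (1 - Δ) ^ t * |lam| ≤ ε * |lam| := by linarith [h6]
    exact le_of_mul_le_mul_right h7 hcpos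
  by_cases hΔeq : Δ = 1
  · rw [hΔeq]
    norm_num
  · have hΔlt : Δ < 1 := lt_of_le_of_ne hΔ1 hΔeq
    have hq0 : (0 : ℝ) < 1 - Δ := by linarith
    have h2 : (t : ℝ) * Real.log (1 - Δ) ≤ Real.log ε := by
      have := Real.log_le_log (by positivity) hqt
      rwa [Real.log_pow] at this
      -- log ((1-Δ)^t) = t * log (1-Δ)
    have h4 : - Real.log (1 - Δ) ≤ Δ / (1 - Δ) := by
      have h5 : Real.log (1 - Δ)⁻¹ ≤ (1 - Δ)⁻¹ - 1 :=
        Real.log_le_sub_one_of_pos (by positivity)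
      rw [Real.log_inv] at h5
      have h8 : (1 - Δ)⁻¹ - 1 = Δ / (1 - Δ) := by field_simp; ring
      linarith
    have hlog : Real.log (1 / ε) ≤ (t : ℝ) * (Δ / (1 - Δ)) := by
      rw [one_div, Real.log_inv]
      have h9 := mul_le_mul_of_nonneg_left h4 (Nat.cast_nonneg t : (0 : ℝ) ≤ t)
      nlinarith [h2, h9]
    have hpos : (0 : ℝ) ≤ 1 / Δ - 1 := by
      have h10 : 1 / Δ - 1 = (1 - Δ) / Δ := by field_simp
      rw [h10]
      positivity
    calc (1 / Δ - 1) * Real.log (1 / ε)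
        ≤ (1 / Δ - 1) * ((t : ℝ) * (Δ / (1 - Δ))) := mul_le_mul_of_nonneg_left hlog hpos
      _ = (t : ℝ) := by
          field_simp
end

section
/- Let {O_j}_{j} be a finite family of commuting Hermitian matrices with Σ_j O_j² = I, let ρ be a density matrix, and let w_j ∈ ℝ be real values. Define E = Σ_j w_j tr(O_j² ρ), V = Σ_j (w_j − E)² tr(O_j² ρ), and C = Σ_{j,k} (w_j − E)(w_k − E) tr(O_k O_j ρ O_j O_k). Then 0 ≤ C ≤ V. -/
open Matrix
open scoped ComplexOrder

lemma trace_re_nonneg_of_posSemidef {n : Type*} [Fintype n] [DecidableEq n]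
    {M : Matrix n n ℂ} (h : M.PosSemidef) : 0 ≤ M.trace.re := by
  have hd : ∀ i, 0 ≤ (M i i).re := by
    intro i
    have h0 : (0 : ℂ) ≤ M i i := by
      exact h.diag_nonneg
    exact (Complex.le_def.mp h0).1
  rw [Matrix.trace, Complex.re_sum]
  exact Finset.sum_nonneg fun i _ => hd i


/-- For a finite family of commuting Hermitian matrices `O_j` with `∑_j O_j² = I`, a density
matrix `ρ` and real values `w_j`: with `E = ∑_j w_j tr(O_j² ρ)`,
`V = ∑_j (w_j − E)² tr(O_j² ρ)` and
`C = ∑_{j,k} (w_j − E)(w_k − E) tr(O_k O_j ρ O_j O_k)`, we have `0 ≤ C ≤ V`. -/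
theorem covariance_le_variance {n ι : Type*} [Fintype n] [DecidableEq n] [Fintype ι]
    (O : ι → Matrix n n ℂ)
    (hherm : ∀ j, (O j).IsHermitian)
    (hcomm : ∀ j k, O j * O k = O k * O j)
    (hsum : ∑ j, O j * O j = 1)
    (ρ : Matrix n n ℂ) (hρ : ρ.PosSemidef) (htr : ρ.trace = 1)
    (w : ι → ℝ) (Ex V C : ℝ)
    (hE : Ex = ∑ j, w j * ((O j * O j * ρ).trace).re)
    (hV : V = ∑ j, (w j - Ex) ^ 2 * ((O j * O j * ρ).trace).re)
    (hC : C = ∑ j, ∑ k,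
      (w j - Ex) * (w k - Ex) * ((O k * O j * ρ * O j * O k).trace).re) :
    0 ≤ C ∧ C ≤ V := by
  obtain ⟨c, hc⟩ : ∃ c : ι → ℝ, ∀ j, c j = w j - Ex := ⟨_, fun _ => rfl⟩
  have hC' : C = ∑ j, ∑ k, c j * c k * ((O k * O j * ρ * O j * O k).trace).re := by
    rw [hC]; simp only [hc]
  have hV' : V = ∑ j, c j ^ 2 * ((O j * O j * ρ).trace).re := by
    rw [hV]; simp only [hc]
  -- commutation of squares
  have hOP : ∀ j k, O j * (O k * O k) = O k * O k * O j := by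
    intro j k
    rw [← mul_assoc, hcomm j k, mul_assoc, hcomm j k, ← mul_assoc]
  have hPP : ∀ j k, O j * O j * (O k * O k) = O k * O k * (O j * O j) := by
    intro j k
    calc O j * O j * (O k * O k) = O j * (O j * (O k * O k)) := by rw [mul_assoc]
      _ = O j * (O k * O k * O j) := by rw [hOP j k]
      _ = O j * (O k * O k) * O j := by rw [← mul_assoc]
      _ = O k * O k * O j * O j := by rw [hOP j k]
      _ = O k * O k * (O j * O j) := by rw [mul_assoc (O k * O k)]
  -- key trace identity
  have htrace : ∀ j k, (O k * O j * ρ * O j * O k).trace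
      = (O j * O j * (O k * O k) * ρ).trace := by
    intro j k
    rw [trace_mul_comm]
    have h2 : O k * (O k * O j * ρ * O j) = (O k * O k * O j * ρ) * O j := by
      noncomm_ring
    rw [h2, trace_mul_comm]
    congr 1
    have h3 : O j * (O k * O k * O j) = O j * O j * (O k * O k) := by
      rw [← hOP j k, ← mul_assoc]
    calc O j * (O k * O k * O j * ρ) = O j * (O k * O k * O j) * ρ := by noncomm_ring
      _ = O j * O j * (O k * O k) * ρ := by rw [h3]
  -- nonnegativity of each trace term
  have htnn : ∀ j k, 0 ≤ ((O k * O j * ρ * O j * O k).trace).re := by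
    intro j k
    have hM : (O k * O j)ᴴ = O j * O k := by
      rw [conjTranspose_mul, (hherm j).eq, (hherm k).eq]
    have hps := hρ.mul_mul_conjTranspose_same (O k * O j)
    rw [hM] at hps
    have heq : O k * O j * ρ * O j * O k = O k * O j * ρ * (O j * O k) := by
      rw [mul_assoc]
    rw [heq]
    exact trace_re_nonneg_of_posSemidef hps
  -- symmetry
  have htsym : ∀ j k, ((O k * O j * ρ * O j * O k).trace).re
      = ((O j * O k * ρ * O k * O j).trace).re := by
    intro j k
    rw [htrace j k, htrace k j, hPP j k]
  -- marginal sums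
  have hmarg : ∀ j, ∑ k, ((O k * O j * ρ * O j * O k).trace).re
      = ((O j * O j * ρ).trace).re := by
    intro j
    have : ∑ k, (O k * O j * ρ * O j * O k).trace = (O j * O j * ρ).trace := by
      simp only [htrace]
      rw [← trace_sum]
      congr 1
      rw [← Finset.sum_mul, ← Finset.mul_sum, hsum, mul_one]
    rw [← Complex.re_sum, this]
  -- V as double sum
  have hV2 : V = ∑ j, ∑ k, c j ^ 2 * ((O k * O j * ρ * O j * O k).trace).re := by
    rw [hV']
    refine Finset.sum_congr rfl fun j _ => ?_
    rw [← hmarg j, Finset.mul_sum]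
  -- nonnegativity of C : C = Re tr(A ρ A) with A hermitian
  have hCnn : 0 ≤ C := by
    set A : Matrix n n ℂ := ∑ j, (c j : ℂ) • (O j * O j) with hA
    have hAH : Aᴴ = A := by
      rw [hA, conjTranspose_sum]
      refine Finset.sum_congr rfl fun j _ => ?_
      rw [conjTranspose_smul, conjTranspose_mul, (hherm j).eq]
      simp [Complex.star_def, Complex.conj_ofReal]
    have hps := hρ.mul_mul_conjTranspose_same A
    rw [hAH] at hps
    have hCeq : C = ((A * ρ * A).trace).re := by
      have hexp : A * ρ * A = ∑ j, ∑ k, ((c j : ℂ) * c k) • (O j * O j * (ρ * (O k * O k))) := by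
        rw [hA, Finset.sum_mul, Finset.sum_mul]
        refine Finset.sum_congr rfl fun j _ => ?_
        rw [Finset.mul_sum]
        refine Finset.sum_congr rfl fun k _ => ?_
        rw [smul_mul_assoc, smul_mul_assoc, mul_smul_comm, smul_smul, mul_assoc]
      have htr2 : ∀ j k, (O j * O j * (ρ * (O k * O k))).trace
          = (O k * O j * ρ * O j * O k).trace := by
        intro j k
        rw [htrace j k, ← mul_assoc, trace_mul_comm, ← mul_assoc, ← mul_assoc]
        rw [mul_assoc (O k * O k) (O j) (O j), ← hPP j k]
      rw [hC', hexp, trace_sum]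
      rw [Complex.re_sum]
      refine Finset.sum_congr rfl fun j _ => ?_
      rw [trace_sum, Complex.re_sum]
      refine Finset.sum_congr rfl fun k _ => ?_
      rw [trace_smul, htr2 j k]
      simp [Complex.ofReal_mul, mul_assoc]
    rw [hCeq]
    exact trace_re_nonneg_of_posSemidef hps
  refine ⟨hCnn, ?_⟩
  -- C ≤ V via symmetrization
  have key : 0 ≤ ∑ j, ∑ k, (c j - c k) ^ 2 * ((O k * O j * ρ * O j * O k).trace).re := by
    refine Finset.sum_nonneg fun j _ => Finset.sum_nonneg fun k _ => ?_
    exact mul_nonneg (sq_nonneg _) (htnn j k)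
  have hswap : ∑ j, ∑ k, c k ^ 2 * ((O k * O j * ρ * O j * O k).trace).re
      = ∑ j, ∑ k, c j ^ 2 * ((O k * O j * ρ * O j * O k).trace).re := by
    rw [Finset.sum_comm]
    refine Finset.sum_congr rfl fun j _ => Finset.sum_congr rfl fun k _ => ?_
    rw [htsym j k]
  have hexpand : ∑ j, ∑ k, (c j - c k) ^ 2 * ((O k * O j * ρ * O j * O k).trace).re
      = 2 * V - 2 * C := by
    have : ∀ j k, (c j - c k) ^ 2 * ((O k * O j * ρ * O j * O k).trace).re
        = c j ^ 2 * ((O k * O j * ρ * O j * O k).trace).re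
          + c k ^ 2 * ((O k * O j * ρ * O j * O k).trace).re
          - 2 * (c j * c k * ((O k * O j * ρ * O j * O k).trace).re) := by
      intro j k; ring
    simp only [this, Finset.sum_sub_distrib, Finset.sum_add_distrib, ← Finset.mul_sum]
    rw [hswap]
    simp only [hmarg]
    rw [← hV', ← hV2, ← hC']
    ring
  linarith
end
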